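/- arXiv:1912.01365 — 5 statements merged into one kernel-verified Lean document; each statement's English description precedes it below -/
import Mathlib

section
/- If an FBAS (V,S) has quorum intersection, then its trust graph has a greatest SCC, i.e., an SCC reachable from every other SCC. -/
open Set

variable {α : Type*}

/-- `(V, S)` is a federated Byzantine agreement system: every node `v ∈ V` has a
nonempty set of slices, each slice containing `v` and consisting of nodes of `V`. -/
def IsFBAS (V : Set α) (S : α → Set (Set α)) : Prop :=
  ∀ v ∈ V, (S v).Nonempty ∧ ∀ s ∈ S v, v ∈ s ∧ s ⊆ V

/-- A nonempty `Q ⊆ V` is a quorum if every member has a slice contained in `Q`. -/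
def IsQuorum (V : Set α) (S : α → Set (Set α)) (Q : Set α) : Prop :=
  Q.Nonempty ∧ Q ⊆ V ∧ ∀ v ∈ Q, ∃ s ∈ S v, s ⊆ Q

/-- Any two quorums have nonempty intersection. -/
def HasQuorumIntersection (V : Set α) (S : α → Set (Set α)) : Prop :=
  ∀ Q₁ Q₂, IsQuorum V S Q₁ → IsQuorum V S Q₂ → (Q₁ ∩ Q₂).Nonempty

/-- The slice function of the FBAS with the nodes of `D` deleted. -/
def deleteS (S : α → Set (Set α)) (D : Set α) : α → Set (Set α) :=
  fun v => (· \ D) '' S v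

/-- `D` is a dispensable set (DSet) of `(V, S)`. -/
def IsDSet (V : Set α) (S : α → Set (Set α)) (D : Set α) : Prop :=
  D ⊆ V ∧ HasQuorumIntersection (V \ D) (deleteS S D) ∧
    (IsQuorum V S (V \ D) ∨ D = V)

/-- `v` is `B`-intact: some DSet contains `B` but not `v`. -/
def Intact (V : Set α) (S : α → Set (Set α)) (B : Set α) (v : α) : Prop :=
  ∃ D, IsDSet V S D ∧ B ⊆ D ∧ v ∉ D

/-- Edge relation of the trust graph: `u → v` iff `v` lies in some slice of `u`. -/
def trustE (S : α → Set (Set α)) (u v : α) : Prop := ∃ s ∈ S u, v ∈ s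

/-- Reachability: reflexive-transitive closure of the edge relation. -/
def Reach (E : α → α → Prop) : α → α → Prop := Relation.ReflTransGen E

/-- `U` is strongly connected: any two of its nodes are mutually reachable. -/
def StronglyConn (E : α → α → Prop) (U : Set α) : Prop :=
  ∀ u ∈ U, ∀ v ∈ U, Reach E u v

/-- `C` is a strongly connected component of the graph on `V`: nonempty,
strongly connected, and no proper superset (within `V`) is strongly connected. -/
def IsSCC (V : Set α) (E : α → α → Prop) (C : Set α) : Prop :=
  C.Nonempty ∧ C ⊆ V ∧ StronglyConn E C ∧
    ∀ C', C ⊆ C' → C' ⊆ V → StronglyConn E C' → C' ⊆ C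

/-- `D` is reachable from `C` (as sets of nodes). -/
def SCCReach (E : α → α → Prop) (C D : Set α) : Prop :=
  ∃ c ∈ C, ∃ d ∈ D, Reach E c d

/-- A trust cluster: a subset of `V` closed under reachability in the trust graph. -/
def TrustCluster (V : Set α) (S : α → Set (Set α)) (Z : Set α) : Prop :=
  Z ⊆ V ∧ ∀ u ∈ Z, ∀ v, Reach (trustE S) u v → v ∈ Z

/-- Slice function of the symmetric simple FBAS `(V, k)`: the slices of `v` are
all `k`-element subsets of `V` containing `v`. -/
def symS (V : Set α) (k : ℕ) : α → Set (Set α) :=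
  fun v => {U | v ∈ U ∧ U ⊆ V ∧ U.ncard = k}

/-- A `B`-quorum: nonempty `Q ⊆ V` such that every member outside `B` has a slice in `Q`. -/
def IsBQuorum (V : Set α) (S : α → Set (Set α)) (B : Set α) (Q : Set α) : Prop :=
  Q.Nonempty ∧ Q ⊆ V ∧ ∀ v ∈ Q \ B, ∃ s ∈ S v, s ⊆ Q

/-- A `B`-intact set. -/
def IsBIntactSet (V : Set α) (S : α → Set (Set α)) (B U : Set α) : Prop :=
  U ⊆ V \ B ∧ (U = ∅ ∨ IsBQuorum V S B U) ∧
    ∀ Q Q', IsBQuorum V S B Q → IsBQuorum V S B Q' →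
      (Q ∩ U).Nonempty → (Q' ∩ U).Nonempty → (Q ∩ Q' ∩ U).Nonempty

/-- The `B`-subslice property. -/
def SubsliceProp (V : Set α) (S : α → Set (Set α)) (B : Set α) : Prop :=
  ∀ v ∈ V \ B, ∀ s ∈ S v, ∀ u ∈ s \ B, ∃ s' ∈ S u, s' ⊆ s

/-- `(V, S)` is resilient against `m` ill-behaved nodes: for every set `B` of at
most `m` nodes, every node outside `B` is `B`-intact. -/
def Resilient (V : Set α) (S : α → Set (Set α)) (m : ℕ) : Prop :=
  ∀ B ⊆ V, B.ncard ≤ m → ∀ v ∈ V \ B, Intact V S B v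


/-- Reach set of a node in the trust graph. -/
private def Rset (S : α → Set (Set α)) (v : α) : Set α := {w | Reach (trustE S) v w}

private lemma Rset_subset_V {V : Set α} {S : α → Set (Set α)} (hF : IsFBAS V S)
    {v : α} (hv : v ∈ V) : Rset S v ⊆ V := by
  intro w hw
  induction hw with
  | refl => exact hv
  | tail _ e ih =>
    obtain ⟨s, hs, hws⟩ := e
    exact ((hF _ ih).2 s hs).2 hws

private lemma Rset_quorum {V : Set α} {S : α → Set (Set α)} (hF : IsFBAS V S)
    {v : α} (hv : v ∈ V) : IsQuorum V S (Rset S v) := by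
  refine ⟨⟨v, Relation.ReflTransGen.refl⟩, Rset_subset_V hF hv, ?_⟩
  intro u hu
  have huV : u ∈ V := Rset_subset_V hF hv hu
  obtain ⟨⟨s, hs⟩, hall⟩ := hF u huV
  exact ⟨s, hs, fun w hw => Relation.ReflTransGen.tail hu ⟨s, hs, hw⟩⟩

private lemma Rset_mono {S : α → Set (Set α)} {v w : α} (h : w ∈ Rset S v) :
    Rset S w ⊆ Rset S v := fun _ h2 => Relation.ReflTransGen.trans h h2

/-- If an FBAS has quorum intersection, its trust graph has a
greatest SCC, i.e., an SCC reachable from every other SCC. -/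
theorem greatest_scc_exists (V : Set α) (S : α → Set (Set α))
    (hF : IsFBAS V S) (hfin : V.Finite) (hne : V.Nonempty)
    (hQI : HasQuorumIntersection V S) :
    ∃ C, IsSCC V (trustE S) C ∧
      ∀ C', IsSCC V (trustE S) C' → C' ≠ C → SCCReach (trustE S) C' C := by
  -- choose c ∈ V with Rset S c minimal under inclusion
  have hfam : (Rset S '' V).Finite :=
    (hfin.finite_subsets.subset (by rintro _ ⟨v, hv, rfl⟩; exact Rset_subset_V hF hv)).subset
      (fun x hx => hx)
  obtain ⟨R, hRmem, hRmin⟩ : ∃ R ∈ Rset S '' V, ∀ R' ∈ Rset S '' V, id R' ≤ id R → id R = id R' := by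
    obtain ⟨R, hR1, hR2⟩ := hfam.exists_minimal (hne.image _)
    exact ⟨R, hR1, fun R' h1 h2 => le_antisymm (hR2 h1 h2) h2⟩
  obtain ⟨c, hcV, rfl⟩ := hRmem
  have hcR : c ∈ Rset S c := Relation.ReflTransGen.refl
  have hmin : ∀ w ∈ Rset S c, Rset S w = Rset S c := by
    intro w hw
    exact (hRmin _ ⟨w, Rset_subset_V hF hcV hw, rfl⟩ (Rset_mono hw)).symm
  refine ⟨Rset S c, ⟨⟨c, hcR⟩, Rset_subset_V hF hcV, ?_, ?_⟩, ?_⟩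
  · intro u hu v hv
    -- u reaches c since Rset u = Rset c ∋ c... need c ∈ Rset u
    have : c ∈ Rset S u := (hmin u hu).symm ▸ hcR
    exact Relation.ReflTransGen.trans this hv
  · intro C' hsub hC'V hconn w hw
    exact hconn c (hsub hcR) w hw
  · intro C' hC' _
    obtain ⟨c', hc'⟩ := hC'.1
    have hq' : IsQuorum V S (Rset S c') := Rset_quorum hF (hC'.2.1 hc')
    obtain ⟨x, hx1, hx2⟩ := hQI _ _ hq' (Rset_quorum hF hcV)
    exact ⟨c', hc', x, hx2, hx1⟩
end

section
/- In a symmetric simple FBAS (V,k), a set D ⊆ V is a DSet if and only if (1) D = V, or (2) k = 1 and |D| = |V| − 1, or (3) |D| ≤ min(|V| − k, 2k − |V| − 1). -/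
open Set

variable {α : Type*}

lemma exists_ksubset {A : Set α} (hA : A.Finite) {v : α} (hv : v ∈ A) {k : ℕ}
    (hk1 : 1 ≤ k) (hk : k ≤ A.ncard) : ∃ s, v ∈ s ∧ s ⊆ A ∧ s.ncard = k := by
  obtain ⟨t, ht, htc⟩ := Set.exists_subset_card_eq (s := A \ {v}) (n := k - 1)
    (by rw [Set.ncard_diff_singleton_of_mem hv]; omega)
  refine ⟨insert v t, Set.mem_insert _ _, Set.insert_subset hv (ht.trans Set.diff_subset), ?_⟩
  rw [Set.ncard_insert_of_notMem (fun h => (ht h).2 rfl)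
    (hA.subset (ht.trans Set.diff_subset)), htc]
  omega

lemma quorum_iff {V : Set α} (hV : V.Finite) {k : ℕ} (hk1 : 1 ≤ k) {Q : Set α} :
    IsQuorum V (symS V k) Q ↔ Q ⊆ V ∧ k ≤ Q.ncard := by
  constructor
  · rintro ⟨⟨v, hv⟩, hQV, hsl⟩
    obtain ⟨s, ⟨-, -, hsc⟩, hsQ⟩ := hsl v hv
    exact ⟨hQV, hsc ▸ Set.ncard_le_ncard hsQ (hV.subset hQV)⟩
  · rintro ⟨hQV, hkQ⟩
    refine ⟨Set.nonempty_of_ncard_ne_zero (by omega), hQV, fun v hv => ?_⟩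
    obtain ⟨s, hvs, hsQ, hsc⟩ := exists_ksubset (hV.subset hQV) hv hk1 hkQ
    exact ⟨s, ⟨hvs, hsQ.trans hQV, hsc⟩, hsQ⟩

lemma del_quorum_of {V D Q : Set α} (hV : V.Finite) (hD : D ⊆ V) {k : ℕ} (hk1 : 1 ≤ k)
    (hQ : Q ⊆ V \ D) (hne : Q.Nonempty) (hcard : k ≤ Q.ncard + D.ncard) :
    IsQuorum (V \ D) (deleteS (symS V k) D) Q := by
  refine ⟨hne, hQ, fun v hv => ?_⟩
  have hvQD : v ∈ Q ∪ D := Or.inl hv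
  have hQDfin : (Q ∪ D).Finite := hV.subset (Set.union_subset (hQ.trans Set.diff_subset) hD)
  have hdisj : Disjoint Q D := Set.disjoint_of_subset_left hQ Set.disjoint_sdiff_left
  have hcard' : k ≤ (Q ∪ D).ncard := by
    rwa [Set.ncard_union_eq hdisj (hQDfin.subset Set.subset_union_left)
      (hQDfin.subset Set.subset_union_right)]
  obtain ⟨s, hvs, hsQD, hsc⟩ := exists_ksubset hQDfin hvQD hk1 hcard'
  refine ⟨s \ D, ⟨s, ⟨hvs, hsQD.trans (Set.union_subset (hQ.trans Set.diff_subset) hD), hsc⟩, rfl⟩, ?_⟩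
  intro x hx
  rcases hsQD hx.1 with h | h
  · exact h
  · exact absurd h hx.2

lemma del_quorum_card {V D Q : Set α} (hV : V.Finite) (hD : D ⊆ V) {k : ℕ}
    (h : IsQuorum (V \ D) (deleteS (symS V k) D) Q) :
    k ≤ Q.ncard + D.ncard := by
  obtain ⟨⟨v, hv⟩, hQV, hsl⟩ := h
  obtain ⟨t, ⟨s, ⟨-, hsV, hsc⟩, rfl⟩, htQ⟩ := hsl v hv
  have h1 : s ⊆ (s \ D) ∪ D := by
    intro x hx
    by_cases hxD : x ∈ D
    · exact Or.inr hxD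
    · exact Or.inl ⟨hx, hxD⟩
  calc k = s.ncard := hsc.symm
    _ ≤ ((s \ D) ∪ D).ncard :=
        Set.ncard_le_ncard h1 (((hV.subset hsV).diff (t := D)).union (hV.subset hD))
    _ ≤ (s \ D).ncard + D.ncard := Set.ncard_union_le _ _
    _ ≤ Q.ncard + D.ncard :=
        Nat.add_le_add_right (Set.ncard_le_ncard htQ (hV.subset (hQV.trans Set.diff_subset))) _

/-- DSets of a symmetric simple FBAS `(V, k)`:
`D` is a DSet iff `D = V`, or `k = 1` and `|D| = |V| - 1`, or
`|D| ≤ min (|V| - k) (2k - |V| - 1)` (in the integers). -/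
theorem symmetric_simple_dsets (V : Set α) (k : ℕ) (D : Set α)
    (hV : V.Finite) (hk₁ : 1 ≤ k) (hk₂ : k ≤ V.ncard) (hD : D ⊆ V) :
    IsDSet V (symS V k) D ↔
      (D = V ∨ (k = 1 ∧ D.ncard = V.ncard - 1) ∨
        (D.ncard : ℤ) ≤ min ((V.ncard : ℤ) - k) (2 * k - V.ncard - 1)) := by
  have hVfin : V.Finite := hV
  have hVD : (V \ D).ncard = V.ncard - D.ncard := Set.ncard_diff hD (hV.subset hD)
  have hdn : D.ncard ≤ V.ncard := Set.ncard_le_ncard hD hV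
  constructor
  · rintro ⟨-, hQI, hq | rfl⟩
    · have hm : k ≤ (V \ D).ncard := ((quorum_iff hV hk₁).1 hq).2
      rw [hVD] at hm
      by_cases hm1 : V.ncard - D.ncard ≤ 1
      · exact Or.inr (Or.inl ⟨by omega, by omega⟩)
      · push_neg at hm1
        have hk2 : D.ncard + 2 ≤ k := by
          by_contra hc
          push_neg at hc
          obtain ⟨a, ha, b, hb, hab⟩ := (Set.one_lt_ncard (hV.diff (t := D))).1 (by omega : 1 < (V \ D).ncard)
          have hqa := del_quorum_of hV hD hk₁ (Set.singleton_subset_iff.2 ha)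
            (Set.singleton_nonempty a) (by rw [Set.ncard_singleton]; omega)
          have hqb := del_quorum_of hV hD hk₁ (Set.singleton_subset_iff.2 hb)
            (Set.singleton_nonempty b) (by rw [Set.ncard_singleton]; omega)
          obtain ⟨x, hx1, hx2⟩ := hQI _ _ hqa hqb
          simp only [Set.mem_singleton_iff] at hx1 hx2
          exact hab (hx1 ▸ hx2)
        have hsplit : V.ncard - D.ncard < 2 * (k - D.ncard) := by
          by_contra hc
          push_neg at hc
          obtain ⟨Q₁, hQ₁, hQ₁c⟩ := Set.exists_subset_card_eq (s := V \ D)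
            (n := k - D.ncard) (by omega)
          have hQ₁fin : Q₁.Finite := (hV.diff (t := D)).subset hQ₁
          obtain ⟨Q₂, hQ₂, hQ₂c⟩ := Set.exists_subset_card_eq (s := (V \ D) \ Q₁)
            (n := k - D.ncard)
            (by rw [Set.ncard_diff hQ₁ hQ₁fin]; omega)
          have hq1 := del_quorum_of hV hD hk₁ hQ₁
            (Set.nonempty_of_ncard_ne_zero (by omega)) (by omega)
          have hq2 := del_quorum_of hV hD hk₁ (hQ₂.trans Set.diff_subset)
            (Set.nonempty_of_ncard_ne_zero (by omega)) (by omega)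
          obtain ⟨x, hx1, hx2⟩ := hQI _ _ hq1 hq2
          exact (hQ₂ hx2).2 hx1
        exact Or.inr (Or.inr (by omega))
    · exact Or.inl rfl
  · rintro (rfl | ⟨rfl, hdcard⟩ | h3)
    · refine ⟨hD, ?_, Or.inr rfl⟩
      rintro Q₁ Q₂ ⟨⟨v, hv⟩, hQV, -⟩ -
      exact absurd ((hQV hv).1) ((hQV hv).2)
    · refine ⟨hD, ?_, Or.inl ((quorum_iff hV le_rfl).2 ⟨Set.diff_subset, by omega⟩)⟩
      intro Q₁ Q₂ h₁ h₂
      obtain ⟨a, ha⟩ := Set.ncard_eq_one.1 (by omega : (V \ D).ncard = 1)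
      have ha₁ : a ∈ Q₁ := by
        obtain ⟨v, hv⟩ := h₁.1
        have := h₁.2.1 hv
        rw [ha, Set.mem_singleton_iff] at this
        exact this ▸ hv
      have ha₂ : a ∈ Q₂ := by
        obtain ⟨v, hv⟩ := h₂.1
        have := h₂.2.1 hv
        rw [ha, Set.mem_singleton_iff] at this
        exact this ▸ hv
      exact ⟨a, ha₁, ha₂⟩
    · have hnat1 : D.ncard + k ≤ V.ncard := by omega
      have hnat2 : V.ncard + D.ncard + 1 ≤ 2 * k := by omega
      refine ⟨hD, ?_, Or.inl ((quorum_iff hV hk₁).2 ⟨Set.diff_subset, by omega⟩)⟩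
      intro Q₁ Q₂ h₁ h₂
      have c₁ := del_quorum_card hV hD h₁
      have c₂ := del_quorum_card hV hD h₂
      by_contra hcon
      rw [Set.not_nonempty_iff_eq_empty] at hcon
      have hdisj : Disjoint Q₁ Q₂ := Set.disjoint_iff_inter_eq_empty.2 hcon
      have hsub : Q₁ ∪ Q₂ ⊆ V \ D := Set.union_subset h₁.2.1 h₂.2.1
      have hle := Set.ncard_le_ncard hsub (hV.diff (t := D))
      rw [Set.ncard_union_eq hdisj (hV.subset (h₁.2.1.trans Set.diff_subset))
        (hV.subset (h₂.2.1.trans Set.diff_subset))] at hle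
      omega
end

section
/- The minimum number of nodes of a nontrivial symmetric simple FBAS (V,k) with quorum intersection that is resilient against m ≥ 1 ill-behaved nodes is 3m+1, attained with threshold k = 2m+1. -/
open Set

variable {α : Type*}

lemma aux_slice {V U : Set α} {k : ℕ} {v : α} (hv : v ∈ U) (hUV : U ⊆ V)
    (hk : 1 ≤ k) (hkU : k ≤ U.ncard) : ∃ s ∈ symS V k v, s ⊆ U := by
  obtain ⟨s, h1, h2, h3⟩ := Set.exists_subsuperset_card_eq
    (Set.singleton_subset_iff.2 hv) (by simpa using hk) hkU
  exact ⟨s, ⟨Set.singleton_subset_iff.1 h1, h2.trans hUV, h3⟩, h2⟩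

lemma aux_quorum_ncard {V Q : Set α} {k : ℕ} (hV : V.Finite)
    (hQ : IsQuorum V (symS V k) Q) : k ≤ Q.ncard := by
  obtain ⟨⟨v, hv⟩, hQV, h⟩ := hQ
  obtain ⟨s, hs, hsQ⟩ := h v hv
  calc k = s.ncard := hs.2.2.symm
    _ ≤ Q.ncard := Set.ncard_le_ncard hsQ (hV.subset hQV)

lemma aux_quorum_of {V Q : Set α} {k : ℕ} (hQV : Q ⊆ V) (hk : 1 ≤ k)
    (h : Q.ncard = k) : IsQuorum V (symS V k) Q :=
  ⟨Set.nonempty_of_ncard_ne_zero (by omega), hQV,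
    fun v hv => ⟨Q, ⟨hv, hQV, h⟩, subset_rfl⟩⟩

lemma aux_del_quorum_ncard {V D Q : Set α} {k : ℕ} (hV : V.Finite) (hD : D ⊆ V)
    (hQ : IsQuorum (V \ D) (deleteS (symS V k) D) Q) : k ≤ Q.ncard + D.ncard := by
  obtain ⟨⟨v, hv⟩, hQV, h⟩ := hQ
  obtain ⟨t, ⟨s, hs, rfl⟩, htQ⟩ := h v hv
  have h1 : s ⊆ (s \ D) ∪ D := fun x hx => by
    by_cases hxD : x ∈ D <;> simp [hx, hxD]
  calc k = s.ncard := hs.2.2.symm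
    _ ≤ ((s \ D) ∪ D).ncard :=
        Set.ncard_le_ncard h1
          (((hV.subset hs.2.1).diff (t := D)).union (hV.subset hD))
    _ ≤ (s \ D).ncard + D.ncard := Set.ncard_union_le _ _
    _ ≤ Q.ncard + D.ncard := by
        have : (s \ D).ncard ≤ Q.ncard :=
          Set.ncard_le_ncard htQ ((hV.diff (t := D)).subset hQV)
        omega

lemma aux_del_quorum_of {V D Q : Set α} {k : ℕ} (hV : V.Finite) (hD : D ⊆ V)
    (hQ : Q ⊆ V \ D) (hQne : Q.Nonempty) (hcard : Q.ncard + D.ncard = k) :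
    IsQuorum (V \ D) (deleteS (symS V k) D) Q := by
  have hdisj : Disjoint Q D := (Set.subset_diff.mp hQ).2
  refine ⟨hQne, hQ, fun v hv => ?_⟩
  refine ⟨(Q ∪ D) \ D, ⟨Q ∪ D, ⟨Set.mem_union_left _ hv,
    Set.union_subset (hQ.trans Set.diff_subset) hD, ?_⟩, rfl⟩, ?_⟩
  · rw [Set.ncard_union_eq hdisj (hV.subset (hQ.trans Set.diff_subset)) (hV.subset hD)]
    exact hcard
  · intro x hx
    rcases hx.1 with h | h
    · exact h
    · exact absurd h hx.2

/-- The minimum number of nodes of a nontrivial symmetric simple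
FBAS `(V, k)` with quorum intersection that is resilient against `m ≥ 1`
ill-behaved nodes is `3m + 1`, attained with threshold `k = 2m + 1`. -/
theorem symmetric_simple_resilience (m : ℕ) (hm : 1 ≤ m) :
    (∀ (V : Set α) (k : ℕ), V.Finite → 1 < k → k ≤ V.ncard →
      HasQuorumIntersection V (symS V k) → Resilient V (symS V k) m →
      3 * m + 1 ≤ V.ncard) ∧
    (∀ V : Set α, V.Finite → V.ncard = 3 * m + 1 →
      HasQuorumIntersection V (symS V (2 * m + 1)) ∧
        Resilient V (symS V (2 * m + 1)) m) := by
  constructor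
  · intro V k hV hk1 hkn hQI hRes
    set n := V.ncard with hn
    -- Step A : 2k > n from quorum intersection
    have hA : n + 1 ≤ 2 * k := by
      by_contra hA
      push_neg at hA
      obtain ⟨Q₁, hQ₁V, hQ₁c⟩ := Set.exists_subset_card_eq (show k ≤ n by omega)
      have hd : k ≤ (V \ Q₁).ncard := by
        rw [Set.ncard_diff hQ₁V (hV.subset hQ₁V)]; omega
      obtain ⟨Q₂, hQ₂V, hQ₂c⟩ := Set.exists_subset_card_eq hd
      obtain ⟨x, hx1, hx2⟩ := hQI Q₁ Q₂ (aux_quorum_of hQ₁V (by omega) hQ₁c)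
        (aux_quorum_of (hQ₂V.trans Set.diff_subset) (by omega) hQ₂c)
      exact (hQ₂V hx2).2 hx1
    -- Step B : n > m
    have hmn : m < n := by
      by_contra hmn
      push_neg at hmn
      obtain ⟨v, hv⟩ : V.Nonempty := Set.nonempty_of_ncard_ne_zero (by omega)
      have hBc : (V \ {v}).ncard ≤ m := by
        rw [Set.ncard_diff (Set.singleton_subset_iff.2 hv) (Set.finite_singleton v)]
        simp only [Set.ncard_singleton]
        omega
      obtain ⟨D, ⟨hDV, hQId, hor⟩, hBD, hvD⟩ :=
        hRes (V \ {v}) Set.diff_subset hBc v ⟨hv, fun h => h.2 rfl⟩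
      rcases hor with hq | hDeq
      · have hk' := aux_quorum_ncard hV hq
        have hsub : V \ D ⊆ {v} := by
          intro x hx
          by_contra hxv
          exact hx.2 (hBD ⟨hx.1, hxv⟩)
        have : (V \ D).ncard ≤ 1 := by
          simpa using Set.ncard_le_ncard hsub (Set.finite_singleton v)
        omega
      · exact hvD (hDeq ▸ hv)
    -- Step C
    obtain ⟨B, hBV, hBc⟩ := Set.exists_subset_card_eq (show m ≤ n by omega)
    obtain ⟨v, hv⟩ : (V \ B).Nonempty := by
      refine Set.nonempty_of_ncard_ne_zero ?_
      rw [Set.ncard_diff hBV (hV.subset hBV), hBc]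
      omega
    obtain ⟨D, ⟨hDV, hQId, hor⟩, hBD, hvD⟩ := hRes B hBV hBc.le v hv
    have hDfin : D.Finite := hV.subset hDV
    have hmD : m ≤ D.ncard := hBc ▸ Set.ncard_le_ncard hBD hDfin
    have hVDc : (V \ D).ncard = n - D.ncard := Set.ncard_diff hDV hDfin
    have hDn : D.ncard ≤ n := Set.ncard_le_ncard hDV hV
    have hkd : k + D.ncard ≤ n := by
      rcases hor with hq | hDeq
      · have := aux_quorum_ncard hV hq
        rw [hVDc] at this; omega
      · exact absurd (hDeq ▸ hv.1) hvD
    have hdel : n + D.ncard + 1 ≤ 2 * k := by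
      by_contra h
      push_neg at h
      obtain ⟨Q₁, hQ₁, hQ₁c⟩ := Set.exists_subset_card_eq
        (show k - D.ncard ≤ (V \ D).ncard by rw [hVDc]; omega)
      have h2 : k - D.ncard ≤ ((V \ D) \ Q₁).ncard := by
        rw [Set.ncard_diff hQ₁ (((hV.diff (t := D))).subset hQ₁), hVDc, hQ₁c]
        omega
      obtain ⟨Q₂, hQ₂, hQ₂c⟩ := Set.exists_subset_card_eq h2
      have hq1 := aux_del_quorum_of (k := k) hV hDV hQ₁
        (Set.nonempty_of_ncard_ne_zero (by omega)) (by rw [hQ₁c]; omega)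
      have hq2 := aux_del_quorum_of (k := k) hV hDV (hQ₂.trans Set.diff_subset)
        (Set.nonempty_of_ncard_ne_zero (by omega)) (by rw [hQ₂c]; omega)
      obtain ⟨x, hx1, hx2⟩ := hQId Q₁ Q₂ hq1 hq2
      exact (hQ₂ hx2).2 hx1
    omega
  · intro V hV hcard
    have hQI : HasQuorumIntersection V (symS V (2 * m + 1)) := by
      intro Q₁ Q₂ h1 h2
      have c1 := aux_quorum_ncard hV h1
      have c2 := aux_quorum_ncard hV h2
      rw [← Set.not_disjoint_iff_nonempty_inter]
      intro hdisj
      have hu := Set.ncard_union_eq hdisj (hV.subset h1.2.1) (hV.subset h2.2.1)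
      have hle : (Q₁ ∪ Q₂).ncard ≤ V.ncard :=
        Set.ncard_le_ncard (Set.union_subset h1.2.1 h2.2.1) hV
      omega
    refine ⟨hQI, ?_⟩
    intro B hBV hBm v hv
    have hVBc : (V \ B).ncard = 3 * m + 1 - B.ncard := by
      rw [Set.ncard_diff hBV (hV.subset hBV), hcard]
    refine ⟨B, ⟨hBV, ?_, Or.inl ?_⟩, subset_rfl, hv.2⟩
    · intro Q₁ Q₂ h1 h2
      have c1 := aux_del_quorum_ncard hV hBV h1
      have c2 := aux_del_quorum_ncard hV hBV h2
      rw [← Set.not_disjoint_iff_nonempty_inter]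
      intro hdisj
      have hu := Set.ncard_union_eq hdisj
        (hV.subset (h1.2.1.trans Set.diff_subset))
        (hV.subset (h2.2.1.trans Set.diff_subset))
      have hle : (Q₁ ∪ Q₂).ncard ≤ (V \ B).ncard :=
        Set.ncard_le_ncard (Set.union_subset h1.2.1 h2.2.1) (hV.diff (t := B))
      rw [hVBc] at hle
      omega
    · exact ⟨Set.nonempty_of_ncard_ne_zero (by omega), Set.diff_subset,
        fun u hu => aux_slice hu Set.diff_subset (by omega) (by omega)⟩
end

section
/- Let (V,S) be an FBAS with quorum intersection satisfying the B-subslice property. Then a node v is B-intact if and only if v is contained in a B-intact set. -/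
open Set

variable {α : Type*}

/-- Under the `B`-subslice property (and quorum intersection),
a node is `B`-intact iff it belongs to a `B`-intact set. -/
theorem intact_iff_in_intact_set (V : Set α) (S : α → Set (Set α))
    (hF : IsFBAS V S) (hQI : HasQuorumIntersection V S) (B : Set α) (hB : B ⊆ V)
    (hsub : SubsliceProp V S B) (v : α) (hv : v ∈ V) :
    Intact V S B v ↔ ∃ U, IsBIntactSet V S B U ∧ v ∈ U := by
  constructor
  · rintro ⟨D, ⟨hDV, hQID, hor⟩, hBD, hvD⟩
    refine ⟨V \ D, ⟨fun x hx => ⟨hx.1, fun hxB => hx.2 (hBD hxB)⟩, ?_, ?_⟩, hv, hvD⟩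
    · rcases hor with hq | hDV'
      · exact Or.inr ⟨hq.1, hq.2.1, fun u hu => hq.2.2 u hu.1⟩
      · exact absurd hDV' (fun h => hvD (h ▸ hv))
    · intro Q Q' hQ hQ' hQU hQ'U
      have key : ∀ R, IsBQuorum V S B R → (R ∩ (V \ D)).Nonempty →
          IsQuorum (V \ D) (deleteS S D) (R \ D) := by
        intro R hR hRU
        refine ⟨⟨hRU.choose, hRU.choose_spec.1, hRU.choose_spec.2.2⟩,
          fun x hx => ⟨hR.2.1 hx.1, hx.2⟩, fun u hu => ?_⟩
        obtain ⟨s, hs, hsR⟩ := hR.2.2 u ⟨hu.1, fun h => hu.2 (hBD h)⟩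
        exact ⟨s \ D, ⟨s, hs, rfl⟩, fun x hx => ⟨hsR hx.1, hx.2⟩⟩
      obtain ⟨x, hx1, hx2⟩ := hQID _ _ (key Q hQ hQU) (key Q' hQ' hQ'U)
      exact ⟨x, ⟨hx1.1, hx2.1⟩, hQ.2.1 hx1.1, hx1.2⟩
  · rintro ⟨U, ⟨hUVB, hUq, hUint⟩, hvU⟩
    have hUV : U ⊆ V := hUVB.trans diff_subset
    have hUeq : V \ (V \ U) = U := diff_diff_cancel_left hUV
    have hBQ : IsBQuorum V S B U := by
      rcases hUq with h | h
      · exact absurd (h ▸ hvU) (notMem_empty v)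
      · exact h
    refine ⟨V \ U, ⟨diff_subset, ?_, Or.inl ?_⟩,
      fun b hb => ⟨hB hb, fun hbU => (hUVB hbU).2 hb⟩, fun h => h.2 hvU⟩
    · have ext : ∀ Q, IsQuorum (V \ (V \ U)) (deleteS S (V \ U)) Q →
          ∃ Qh, IsBQuorum V S B Qh ∧ Qh ∩ U = Q := by
        intro Q hQ
        have hQU : Q ⊆ U := hUeq ▸ hQ.2.1
        have hch : ∀ u ∈ Q, ∃ s ∈ S u, s \ (V \ U) ⊆ Q := by
          intro u hu
          obtain ⟨t, ⟨s, hs, rfl⟩, ht⟩ := hQ.2.2 u hu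
          exact ⟨s, hs, ht⟩
        choose f hf1 hf2 using hch
        refine ⟨Q ∪ {x | ∃ u, ∃ h : u ∈ Q, x ∈ f u h}, ⟨?_, ?_, ?_⟩, ?_⟩
        · exact hQ.1.mono subset_union_left
        · rintro x (hx | ⟨u, hu, hx⟩)
          · exact hUV (hQU hx)
          · exact ((hF u (hUV (hQU hu))).2 _ (hf1 u hu)).2 hx
        · rintro w ⟨(hw | ⟨u, hu, hw⟩), hwB⟩
          · exact ⟨f w hw, hf1 w hw, fun x hx => Or.inr ⟨w, hw, hx⟩⟩
          · obtain ⟨s', hs', hsub'⟩ :=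
              hsub u (hUVB (hQU hu)) _ (hf1 u hu) w ⟨hw, hwB⟩
            exact ⟨s', hs', fun x hx => Or.inr ⟨u, hu, hsub' hx⟩⟩
        · apply subset_antisymm
          · rintro x ⟨(hx | ⟨u, hu, hx⟩), hxU⟩
            · exact hx
            · exact hf2 u hu ⟨hx, fun h => h.2 hxU⟩
          · exact fun x hx => ⟨Or.inl hx, hQU hx⟩
      intro Q₁ Q₂ h₁ h₂
      obtain ⟨Qh₁, hQh₁, he₁⟩ := ext Q₁ h₁
      obtain ⟨Qh₂, hQh₂, he₂⟩ := ext Q₂ h₂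
      obtain ⟨x, hx⟩ := hUint Qh₁ Qh₂ hQh₁ hQh₂
        (by rw [he₁]; exact h₁.1) (by rw [he₂]; exact h₂.1)
      exact ⟨x, by rw [← he₁]; exact ⟨hx.1.1, hx.2⟩,
        by rw [← he₂]; exact ⟨hx.1.2, hx.2⟩⟩
    · rw [hUeq]
      exact ⟨⟨v, hvU⟩, hUV, fun u hu => hBQ.2.2 u ⟨hu, fun h => (hUVB hu).2 h⟩⟩
end

section
/- Let Z be a trust cluster of an FBAS (V,S) with quorum intersection and let D be a DSet of (V,S). Then D ∩ Z is a DSet of the restricted FBAS (Z, S|_Z). -/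
open Set

variable {α : Type*}

/-- If `Z` is a trust cluster of an FBAS with quorum intersection
and `D` is a DSet of `(V, S)`, then `D ∩ Z` is a DSet of `(Z, S|_Z)`. -/
theorem dset_restrict_trust_cluster (V : Set α) (S : α → Set (Set α))
    (hF : IsFBAS V S) (hQI : HasQuorumIntersection V S)
    (Z : Set α) (hZ : TrustCluster V S Z) (D : Set α) (hD : IsDSet V S D) :
    IsDSet Z S (D ∩ Z) := by
  obtain ⟨hZV, hZcl⟩ := hZ
  obtain ⟨hDV, hDQI, hDq⟩ := hD
  -- any slice of a node in Z is contained in Z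
  have hslice : ∀ v ∈ Z, ∀ s ∈ S v, s ⊆ Z := by
    intro v hv s hs w hw
    exact hZcl v hv w (Relation.ReflTransGen.single ⟨s, hs, hw⟩)
  have hdiff : Z \ (D ∩ Z) = Z \ D := by
    ext x; simp [mem_diff]
  refine ⟨inter_subset_right, ?_, ?_⟩
  · -- quorum intersection after deletion
    intro Q₁ Q₂ h₁ h₂
    have key : ∀ Q, IsQuorum (Z \ (D ∩ Z)) (deleteS S (D ∩ Z)) Q →
        IsQuorum (V \ D) (deleteS S D) Q := by
      intro Q ⟨hne, hQsub, hq⟩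
      rw [hdiff] at hQsub
      refine ⟨hne, hQsub.trans (diff_subset_diff_left hZV), ?_⟩
      intro v hv
      obtain ⟨s', hs', hsub⟩ := hq v hv
      obtain ⟨s, hs, rfl⟩ := hs'
      have hsZ : s ⊆ Z := hslice v ((hQsub hv).1) s hs
      have : s \ (D ∩ Z) = s \ D := by
        ext x; have := @hsZ x; simp [mem_diff]; tauto
      exact ⟨s \ D, ⟨s, hs, rfl⟩, by rw [← this]; exact hsub⟩
    exact hDQI Q₁ Q₂ (key Q₁ h₁) (key Q₂ h₂)
  · rcases hDq with hq | rfl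
    · by_cases hZD : Z ⊆ D
      · right
        exact le_antisymm inter_subset_right (subset_inter hZD le_rfl)
      · left
        rw [hdiff]
        obtain ⟨hne, _, hqs⟩ := hq
        refine ⟨?_, diff_subset, ?_⟩
        · rcases not_subset.mp hZD with ⟨x, hxZ, hxD⟩
          exact ⟨x, hxZ, hxD⟩
        · intro v hv
          obtain ⟨s, hs, hsub⟩ := hqs v ⟨hZV hv.1, hv.2⟩
          exact ⟨s, hs, fun w hw => ⟨hslice v hv.1 s hs hw, (hsub hw).2⟩⟩
    · right
      exact le_antisymm inter_subset_right (subset_inter hZV le_rfl)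
end
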